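/- arXiv:2004.02890 — 2 statements merged into one kernel-verified Lean document; each statement's English description precedes it below -/
import Mathlib

section
/- Let A = R[x_1,…,x_n] ⊗ Λ_R[θ_1,…,θ_n] over a field R of characteristic zero, and Δ = Σ_i ∂_{x_i}∂_{θ_i} the BV Laplacian. Fix a multi-index I ⊆ {1,…,n} with |I| = k and a homogeneous polynomial f ∈ R[x_1,…,x_n] of degree d, and suppose d + n − k > 0. Define h(f·θ_I) := (d + n − k)^{−1} Σ_{a=1}^n x_a·f·θ_a·θ_I, where θ_I = θ_{i_1}⋯θ_{i_k}. Then (Δ∘h + h∘Δ)(f·θ_I) = f·θ_I, where on the right-hand side of hΔ the same formula for h is applied to each bihomogeneous summand of Δ(fθ_I) (which has polynomial degree d−1 and exterior degree k−1, so the prefactor is the same (d+n−k)^{−1}). -/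
/-!
We model `A = R[x_1,…,x_n] ⊗ Λ_R[θ_1,…,θ_n]` over a field `R` of characteristic zero as the
free `R`-module on the monomial basis `(Fin n →₀ ℕ) × Finset (Fin n)`, a basis element
`(k, S)` representing `x^k ⊗ θ_S`.  `DeltaBV` is the BV Laplacian `Δ = ∑ i ∂_{x_i}∂_{θ_i}`.
`hBV` is the homotopy: on a bihomogeneous element of polynomial degree `d` and exterior
degree `k` it is `v ↦ (d + n - k)⁻¹ ∑ a, x_a · v · θ_a` (i.e. `h(f θ_I) =
(d+n-k)⁻¹ ∑ a x_a f θ_a θ_I`); on monomials: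
`hBV (x^m θ_S) = (deg m + n - #S)⁻¹ ∑_{a ∉ S} (-1)^{#{j ∈ S | j < a}} x^{m+e_a} θ_{S∪{a}}`.
The statement: for every element `v` supported on monomials of polynomial degree `d` and with
exterior factor exactly `θ_I`, if `#I < d + n` then `(Δ∘h + h∘Δ) v = v`.
-/

noncomputable section

variable (R : Type*) [Field R] [CharZero R] (n : ℕ)

/-- monomial basis of `R[x] ⊗ Λ[θ]` -/
abbrev BVBasis := (Fin n →₀ ℕ) × Finset (Fin n)

/-- the underlying module of `R[x] ⊗ Λ_R[θ]` -/
abbrev BVForms := BVBasis n →₀ R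

/-- the Koszul sign `(-1)^{#{j ∈ S | j < i}}` -/
def insSign (i : Fin n) (S : Finset (Fin n)) : R :=
  (-1) ^ (S.filter (· < i)).card

/-- extend a map defined on basis monomials to a linear endomorphism -/
def ofBasis (f : BVBasis n → BVForms R n) : BVForms R n →ₗ[R] BVForms R n :=
  Finsupp.lsum ℕ fun b => LinearMap.smulRight (LinearMap.id : R →ₗ[R] R) (f b)

/-- the BV Laplacian `Δ = ∑ i, ∂_{x_i} ∘ ∂_{θ_i}` -/
def DeltaBV : BVForms R n →ₗ[R] BVForms R n :=
  ofBasis R n fun b => ∑ i ∈ b.2,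
    ((b.1 i : R) * insSign R n i b.2) •
      Finsupp.single (b.1 - Finsupp.single i 1, b.2.erase i) (1 : R)

/-- the homotopy `h(f θ_I) = (d + n - #I)⁻¹ ∑ a, x_a f θ_a θ_I` -/
def hBV : BVForms R n →ₗ[R] BVForms R n :=
  ofBasis R n fun b =>
    ((((b.1.sum fun _ e => e) + n - b.2.card : ℕ) : R))⁻¹ •
      ∑ a ∈ b.2ᶜ,
        insSign R n a b.2 •
          Finsupp.single (b.1 + Finsupp.single a 1, insert a b.2) (1 : R)

set_option linter.unusedSectionVars false
set_option maxHeartbeats 1000000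

namespace BVAux
variable {R n}

lemma ofBasis_single (f : BVBasis n → BVForms R n) (b : BVBasis n) (c : R) :
    ofBasis R n f (Finsupp.single b c) = c • f b := by
  simp [ofBasis]

lemma hBV_single (m : Fin n →₀ ℕ) (I : Finset (Fin n)) :
    hBV R n (Finsupp.single (m, I) 1) =
      ((((m.sum fun _ e => e) + n - I.card : ℕ) : R))⁻¹ •
        ∑ a ∈ Iᶜ, insSign R n a I •
          Finsupp.single (m + Finsupp.single a 1, insert a I) (1 : R) := by
  rw [hBV, ofBasis_single, one_smul]

lemma DeltaBV_single (m : Fin n →₀ ℕ) (I : Finset (Fin n)) :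
    DeltaBV R n (Finsupp.single (m, I) 1) =
      ∑ i ∈ I, ((m i : R) * insSign R n i I) •
        Finsupp.single (m - Finsupp.single i 1, I.erase i) (1 : R) := by
  rw [DeltaBV, ofBasis_single, one_smul]

lemma insSign_mul_self (a : Fin n) (S : Finset (Fin n)) :
    insSign R n a S * insSign R n a S = 1 := by
  rw [insSign, ← pow_add]
  exact Even.neg_one_pow ⟨_, rfl⟩

lemma insSign_insert_self (a : Fin n) (S : Finset (Fin n)) :
    insSign R n a (insert a S) = insSign R n a S := by
  unfold insSign
  congr 2
  rw [Finset.filter_insert]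
  simp

lemma insSign_erase_self (i : Fin n) (S : Finset (Fin n)) :
    insSign R n i (S.erase i) = insSign R n i S := by
  unfold insSign
  congr 2
  ext x
  simp only [Finset.mem_filter, Finset.mem_erase]
  constructor
  · rintro ⟨⟨_, hx⟩, h⟩; exact ⟨hx, h⟩
  · rintro ⟨hx, h⟩; exact ⟨⟨by rintro rfl; exact lt_irrefl _ h, hx⟩, h⟩

lemma insSign_cancel {a i : Fin n} (S : Finset (Fin n)) (ha : a ∉ S) (hi : i ∈ S) :
    insSign R n a S * insSign R n i (insert a S) +
      insSign R n i S * insSign R n a (S.erase i) = 0 := by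
  have hne : a ≠ i := fun h => ha (h ▸ hi)
  unfold insSign
  rw [Finset.filter_insert, Finset.filter_erase]
  rcases lt_or_gt_of_ne hne with h | h
  · rw [if_pos h, Finset.card_insert_of_notMem
      (fun hmem => ha (Finset.mem_filter.mp hmem).1),
      Finset.erase_eq_of_notMem
      (fun hmem => absurd (Finset.mem_filter.mp hmem).2 (by simp [not_lt, h.le]))]
    rw [pow_succ]
    ring
  · rw [if_neg (by simp [not_lt, h.le]),
      Finset.card_erase_of_mem (Finset.mem_filter.mpr ⟨hi, h⟩)]
    have h1 : 0 < (S.filter (· < a)).card :=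
      Finset.card_pos.mpr ⟨i, Finset.mem_filter.mpr ⟨hi, h⟩⟩
    rw [← Nat.succ_pred_eq_of_pos h1, pow_succ, Nat.succ_sub_one]
    ring

lemma deg_eq_sum (m : Fin n →₀ ℕ) : (m.sum fun _ e => e) = ∑ j, m j :=
  Finsupp.sum_fintype _ _ (fun _ => rfl)

lemma add_sub_swap {a i : Fin n} (m : Fin n →₀ ℕ) (h : a ≠ i) :
    m + Finsupp.single a 1 - Finsupp.single i 1 =
      m - Finsupp.single i 1 + Finsupp.single a 1 := by
  ext j
  simp only [Finsupp.coe_add, Finsupp.coe_tsub, Pi.add_apply, Pi.sub_apply,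
    Finsupp.single_apply]
  split_ifs with h1 h2
  · exact absurd (h1.trans h2.symm) h
  all_goals omega

lemma erase_compl {i : Fin n} (I : Finset (Fin n)) (hi : i ∈ I) :
    (I.erase i)ᶜ = insert i Iᶜ := by
  ext x
  simp only [Finset.mem_compl, Finset.mem_erase, Finset.mem_insert, not_and_or, not_not]

lemma key (m : Fin n →₀ ℕ) (I : Finset (Fin n))
    (hpos : I.card < (m.sum fun _ e => e) + n) :
    DeltaBV R n (hBV R n (Finsupp.single (m, I) 1)) +
      hBV R n (DeltaBV R n (Finsupp.single (m, I) 1)) = Finsupp.single (m, I) 1 := by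
  classical
  set d := m.sum fun _ e => e with hd
  have hcard : I.card ≤ n := by simpa using Finset.card_le_univ I
  have hD0 : ((d + n - I.card : ℕ) : R) ≠ 0 := by
    rw [Nat.cast_ne_zero]; omega
  -- Claim 1 : Δ ∘ h
  have C1 : DeltaBV R n (hBV R n (Finsupp.single (m, I) 1)) =
      ((d + n - I.card : ℕ) : R)⁻¹ •
        ((∑ a ∈ Iᶜ, ((m a : R) + 1)) • Finsupp.single (m, I) (1:R) +
         ∑ a ∈ Iᶜ, ∑ i ∈ I,
           (insSign R n a I * insSign R n i (insert a I) * (m i : R)) •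
             Finsupp.single (m - Finsupp.single i 1 + Finsupp.single a 1,
               insert a (I.erase i)) (1:R)) := by
    rw [hBV_single, map_smul, map_sum, ← hd]
    congr 1
    have step : ∀ a ∈ Iᶜ,
        DeltaBV R n (insSign R n a I •
          Finsupp.single (m + Finsupp.single a 1, insert a I) (1:R)) =
        ((m a : R) + 1) • Finsupp.single (m, I) (1:R) +
        ∑ i ∈ I, (insSign R n a I * insSign R n i (insert a I) * (m i : R)) •
          Finsupp.single (m - Finsupp.single i 1 + Finsupp.single a 1,
            insert a (I.erase i)) (1:R) := by
      intro a ha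
      have ha' : a ∉ I := Finset.mem_compl.mp ha
      rw [map_smul, DeltaBV_single, Finset.sum_insert ha', smul_add]
      congr 1
      · have h1 : ((m + Finsupp.single a 1 : Fin n →₀ ℕ) a) = m a + 1 := by
          simp [Finsupp.add_apply]
        rw [h1, insSign_insert_self, add_tsub_cancel_right, Finset.erase_insert ha',
          smul_smul]
        push_cast
        rw [show insSign R n a I * (((m a : R) + 1) * insSign R n a I) =
          ((m a : R) + 1) * (insSign R n a I * insSign R n a I) by ring,
          insSign_mul_self, mul_one]
      · rw [Finset.smul_sum]
        refine Finset.sum_congr rfl fun i hi => ?_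
        have hne : a ≠ i := fun h => ha' (h ▸ hi)
        have h2 : ((m + Finsupp.single a 1 : Fin n →₀ ℕ) i) = m i := by
          simp [Finsupp.add_apply, Finsupp.single_apply, if_neg hne]
        rw [h2, smul_smul, add_sub_swap m hne, Finset.erase_insert_of_ne hne]
        ring_nf
    rw [Finset.sum_congr rfl step, Finset.sum_add_distrib, ← Finset.sum_smul]
  -- Claim 2 : h ∘ Δ
  have C2 : hBV R n (DeltaBV R n (Finsupp.single (m, I) 1)) =
      ((d + n - I.card : ℕ) : R)⁻¹ •
        ((∑ i ∈ I, (m i : R)) • Finsupp.single (m, I) (1:R) +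
         ∑ i ∈ I, ∑ a ∈ Iᶜ,
           (insSign R n i I * insSign R n a (I.erase i) * (m i : R)) •
             Finsupp.single (m - Finsupp.single i 1 + Finsupp.single a 1,
               insert a (I.erase i)) (1:R)) := by
    rw [DeltaBV_single, map_sum]
    have step : ∀ i ∈ I,
        hBV R n (((m i : R) * insSign R n i I) •
          Finsupp.single (m - Finsupp.single i 1, I.erase i) (1:R)) =
        ((d + n - I.card : ℕ) : R)⁻¹ •
          ((m i : R) • Finsupp.single (m, I) (1:R) +
           ∑ a ∈ Iᶜ, (insSign R n i I * insSign R n a (I.erase i) * (m i : R)) •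
             Finsupp.single (m - Finsupp.single i 1 + Finsupp.single a 1,
               insert a (I.erase i)) (1:R)) := by
      intro i hi
      rcases Nat.eq_zero_or_pos (m i) with h0 | h0
      · simp [h0]
      · have hle : Finsupp.single i 1 ≤ m := Finsupp.single_le_iff.mpr h0
        have hmm : (m - Finsupp.single i 1) + Finsupp.single i 1 = m :=
          tsub_add_cancel_of_le hle
        have hdeg : ((m - Finsupp.single i 1).sum fun _ e => e) + 1 = d := by
          rw [hd]
          conv_rhs => rw [← hmm]
          rw [deg_eq_sum, deg_eq_sum]
          simp [Finsupp.add_apply, Finset.sum_add_distrib, Finsupp.single_apply]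
        have hd1 : 1 ≤ d := by omega
        have hIc : 1 ≤ I.card := Finset.card_pos.mpr ⟨i, hi⟩
        have hD' : ((m - Finsupp.single i 1).sum fun _ e => e) + n - (I.erase i).card
            = d + n - I.card := by
          rw [Finset.card_erase_of_mem hi]; omega
        rw [map_smul, hBV_single, hD', erase_compl I hi,
          Finset.sum_insert (by simp [hi])]
        rw [insSign_erase_self, hmm, Finset.insert_erase hi]
        rw [smul_comm ((m i : R) * insSign R n i I) (((d + n - I.card : ℕ) : R))⁻¹]
        congr 1
        rw [smul_add, smul_smul]
        congr 1
        · rw [show (m i : R) * insSign R n i I * insSign R n i I =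
            (m i : R) * (insSign R n i I * insSign R n i I) by ring,
            insSign_mul_self, mul_one]
        · rw [Finset.smul_sum]
          refine Finset.sum_congr rfl fun a _ => ?_
          rw [smul_smul]
          ring_nf
    rw [Finset.sum_congr rfl step, ← Finset.smul_sum, Finset.sum_add_distrib,
      ← Finset.sum_smul]
  -- cross terms cancel
  have C3 : (∑ a ∈ Iᶜ, ∑ i ∈ I,
        (insSign R n a I * insSign R n i (insert a I) * (m i : R)) •
          Finsupp.single (m - Finsupp.single i 1 + Finsupp.single a 1,
            insert a (I.erase i)) (1:R)) +
      (∑ i ∈ I, ∑ a ∈ Iᶜ,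
        (insSign R n i I * insSign R n a (I.erase i) * (m i : R)) •
          Finsupp.single (m - Finsupp.single i 1 + Finsupp.single a 1,
            insert a (I.erase i)) (1:R)) = 0 := by
    rw [Finset.sum_comm (s := I) (t := Iᶜ), ← Finset.sum_add_distrib]
    refine Finset.sum_eq_zero fun a ha => ?_
    rw [← Finset.sum_add_distrib]
    refine Finset.sum_eq_zero fun i hi => ?_
    rw [← add_smul,
      show insSign R n a I * insSign R n i (insert a I) * (m i : R) +
          insSign R n i I * insSign R n a (I.erase i) * (m i : R) =
        (insSign R n a I * insSign R n i (insert a I) +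
          insSign R n i I * insSign R n a (I.erase i)) * (m i : R) by ring,
      insSign_cancel I (Finset.mem_compl.mp ha) hi, zero_mul, zero_smul]
  -- diagonal sums to D
  have hsplit : ∑ i ∈ I, m i + ∑ a ∈ Iᶜ, m a = d := by
    rw [Finset.sum_add_sum_compl, hd, deg_eq_sum]
  have hnat : (∑ a ∈ Iᶜ, (m a + 1)) + ∑ i ∈ I, m i = d + n - I.card := by
    rw [Finset.sum_add_distrib, Finset.sum_const, smul_eq_mul, mul_one,
      Finset.card_compl, Fintype.card_fin]
    omega
  have Cdiag : (∑ a ∈ Iᶜ, ((m a : R) + 1)) + ∑ i ∈ I, (m i : R) =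
      ((d + n - I.card : ℕ) : R) := by
    rw [← hnat]; push_cast; ring
  rw [C1, C2, ← smul_add, add_add_add_comm, ← add_smul, C3, add_zero, Cdiag,
    smul_smul, inv_mul_cancel₀ hD0, one_smul]

end BVAux

/-- `Δ∘h + h∘Δ = id` on elements `f·θ_I` with `f` homogeneous of degree `d`,
provided `d + n - #I > 0`. -/
theorem bv_homotopy_identity (d : ℕ) (I : Finset (Fin n)) (v : BVForms R n)
    (hsupp : ∀ b ∈ v.support, (b.1.sum fun _ e => e) = d ∧ b.2 = I)
    (hpos : I.card < d + n) :
    DeltaBV R n (hBV R n v) + hBV R n (DeltaBV R n v) = v := by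
  have hv : v = ∑ b ∈ v.support, Finsupp.single b (v b) := (Finsupp.sum_single v).symm
  conv_rhs => rw [hv]
  conv_lhs => rw [hv]
  rw [map_sum, map_sum, map_sum, map_sum, ← Finset.sum_add_distrib]
  refine Finset.sum_congr rfl fun b hb => ?_
  obtain ⟨hdeg, hI⟩ := hsupp b hb
  have hb1 : Finsupp.single b (v b) = v b • Finsupp.single b (1 : R) := by
    rw [Finsupp.smul_single, smul_eq_mul, mul_one]
  rw [hb1, map_smul, map_smul, map_smul, map_smul, ← smul_add]
  congr 1
  obtain ⟨m, S⟩ := b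
  exact BVAux.key m S (by simp only at hdeg hI; rw [hdeg, hI]; rwa [hI] at *)

end
end

section
/- Let A = R[x_1,…,x_n] ⊗ Λ_R[θ_1,…,θ_n] over a field R of characteristic zero and Δ = Σ_i ∂_{x_i}∂_{θ_i}. Then the cohomology ker(Δ)/im(Δ) is a one-dimensional R-vector space generated by the class of θ_1 θ_2 ⋯ θ_n. In particular, an element c·θ_1⋯θ_n (c ∈ R) lies in im(Δ) only if c = 0, and every Δ-closed element of A is congruent modulo im(Δ) to c·θ_1⋯θ_n for a unique c ∈ R. -/
/-!
We model `A = R[x_1,…,x_n] ⊗ Λ_R[θ_1,…,θ_n]` over a field `R` of characteristic zero as the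
free `R`-module on the monomial basis `(Fin n →₀ ℕ) × Finset (Fin n)`, a basis element
`(k, S)` representing `x^k ⊗ θ_S`.  `DeltaBV` is the BV Laplacian `Δ = ∑ i ∂_{x_i}∂_{θ_i}`.
The statement: `ker Δ / im Δ` is a one-dimensional `R`-vector space generated by the class of
`θ_1 ⋯ θ_n` (the basis element `(0, univ)`): `c • θ_1⋯θ_n ∈ im Δ` only if `c = 0`, and every
`Δ`-closed element is congruent modulo `im Δ` to `c • θ_1⋯θ_n` for a unique `c ∈ R`.
-/

noncomputable section

variable (R : Type*) [Field R] [CharZero R] (n : ℕ)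

/-- the top odd monomial `θ_1 θ_2 ⋯ θ_n` -/
def topTheta : BVForms R n := Finsupp.single (0, Finset.univ) 1


section Aux
set_option linter.unusedSectionVars false
variable {R n}


lemma ofBasis_single (f : BVBasis n → BVForms R n) (b : BVBasis n) (r : R) :
    ofBasis R n f (Finsupp.single b r) = r • f b := by
  simp [ofBasis]

lemma insSign_sq (i : Fin n) (S : Finset (Fin n)) : insSign R n i S * insSign R n i S = 1 := by
  simp [insSign, ← pow_add, ← two_mul, pow_mul]

lemma insSign_insert_self {a : Fin n} (S : Finset (Fin n)) :
    insSign R n a (insert a S) = insSign R n a S := by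
  unfold insSign
  congr 2
  ext j
  simp only [Finset.mem_filter, Finset.mem_insert]
  constructor
  · rintro ⟨h1 | h1, h2⟩ <;> [exact absurd h2 (by simp [h1]); exact ⟨h1, h2⟩]
  · rintro ⟨h1, h2⟩; exact ⟨Or.inr h1, h2⟩

lemma insSign_erase_self (i : Fin n) (S : Finset (Fin n)) :
    insSign R n i (S.erase i) = insSign R n i S := by
  unfold insSign
  congr 2
  ext j
  simp only [Finset.mem_filter, Finset.mem_erase]
  constructor
  · rintro ⟨⟨_, h1⟩, h2⟩; exact ⟨h1, h2⟩
  · rintro ⟨h1, h2⟩; exact ⟨⟨by rintro rfl; exact absurd h2 (lt_irrefl _), h1⟩, h2⟩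


set_option linter.unusedSectionVars false

lemma filter_insert_lt {a i : Fin n} (S : Finset (Fin n)) :
    (insert a S).filter (· < i) = if a < i then insert a (S.filter (· < i)) else S.filter (· < i) := by
  split_ifs with h <;> simp [Finset.filter_insert, h]

lemma insSign_insert_ne {a i : Fin n} (S : Finset (Fin n)) (ha : a ∉ S) :
    insSign R n i (insert a S) = (if a < i then -1 else 1) * insSign R n i S := by
  unfold insSign
  rw [filter_insert_lt]
  split_ifs with h
  · rw [Finset.card_insert_of_notMem (by simp [ha])]
    rw [pow_succ, mul_comm, neg_one_mul]
  · rw [one_mul]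

lemma insSign_erase_ne {a i : Fin n} (S : Finset (Fin n)) (hi : i ∈ S) :
    insSign R n a (S.erase i) = (if i < a then -1 else 1) * insSign R n a S := by
  unfold insSign
  have : (S.erase i).filter (· < a) = (S.filter (· < a)).erase i := by
    ext j; simp only [Finset.mem_filter, Finset.mem_erase]; tauto
  rw [this]
  split_ifs with h
  · rw [Finset.card_erase_of_mem (by simp [hi, h])]
    have hpos : 0 < (S.filter (· < a)).card := Finset.card_pos.mpr ⟨i, by simp [hi, h]⟩
    rw [← Nat.succ_pred_eq_of_pos hpos, pow_succ]
    simp [Nat.succ_sub_one]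
  · rw [Finset.erase_eq_of_notMem (by simp [h]), one_mul]

lemma insSign_cross {a i : Fin n} (S : Finset (Fin n)) (ha : a ∉ S) (hi : i ∈ S) :
    insSign R n a S * insSign R n i (insert a S) +
      insSign R n i S * insSign R n a (S.erase i) = 0 := by
  have hne : a ≠ i := fun h => ha (h ▸ hi)
  rw [insSign_insert_ne S ha, insSign_erase_ne S hi]
  rcases lt_or_gt_of_ne hne with h | h
  · rw [if_pos h, if_neg (not_lt_of_gt h)]; ring
  · rw [if_neg (not_lt_of_gt h), if_pos h]; ring

variable (n) in
def Nval (b : BVBasis n) : ℕ := (∑ j, b.1 j) + (n - b.2.card)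

lemma Nval_eq_zero {b : BVBasis n} (h : Nval n b = 0) : b = (0, Finset.univ) := by
  unfold Nval at h
  have h1 : ∑ j, b.1 j = 0 := by omega
  have h2 : n - b.2.card = 0 := by omega
  have hc : b.2.card ≤ n := by
    simpa using (Finset.card_le_univ b.2)
  have hk : b.1 = 0 := by
    ext j
    exact Finset.sum_eq_zero_iff.mp h1 j (Finset.mem_univ j)
  have hS : b.2 = Finset.univ := by
    apply Finset.eq_univ_of_card
    simp; omega
  exact Prod.ext hk hS

lemma single_le_of_pos {k : Fin n →₀ ℕ} {i : Fin n} (h : 1 ≤ k i) :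
    Finsupp.single i 1 ≤ k := by
  rw [Finsupp.single_le_iff]; exact h

lemma sub_add_cancel_fin {k : Fin n →₀ ℕ} {i : Fin n} (h : 1 ≤ k i) :
    k - Finsupp.single i 1 + Finsupp.single i 1 = k :=
  tsub_add_cancel_of_le (single_le_of_pos h)

lemma add_sub_comm_fin {k : Fin n →₀ ℕ} {i a : Fin n} (h : 1 ≤ k i) :
    k - Finsupp.single i 1 + Finsupp.single a 1 = k + Finsupp.single a 1 - Finsupp.single i 1 := by
  ext j
  simp only [Finsupp.tsub_apply, Finsupp.add_apply, Finsupp.single_apply]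
  rcases eq_or_ne i j with rfl | hij <;> simp_all <;> omega

lemma add_sub_cancel_fin (k : Fin n →₀ ℕ) (a : Fin n) :
    k + Finsupp.single a 1 - Finsupp.single a 1 = k := by
  ext j
  simp only [Finsupp.tsub_apply, Finsupp.add_apply]
  omega

lemma sum_sub_single {k : Fin n →₀ ℕ} {i : Fin n} (hk : 1 ≤ k i) :
    (∑ j, (k - Finsupp.single i 1 : Fin n →₀ ℕ) j) + 1 = ∑ j, k j := by
  have key : ∀ j, ((k - Finsupp.single i 1 : Fin n →₀ ℕ)) j = k j - (if i = j then 1 else 0) := by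
    intro j
    rw [Finsupp.tsub_apply, Finsupp.single_apply]
  rw [← Finset.sum_erase_add _ _ (Finset.mem_univ i),
      ← Finset.sum_erase_add _ (fun j => k j) (Finset.mem_univ i)]
  have h2 : ∀ j ∈ Finset.univ.erase i, ((k - Finsupp.single i 1 : Fin n →₀ ℕ)) j = k j := by
    intro j hj
    rw [key j, if_neg (Ne.symm (Finset.mem_erase.mp hj).1)]
    omega
  rw [Finset.sum_congr rfl h2, key i, if_pos rfl]
  have heta : ∑ x ∈ Finset.univ.erase i, k x = (Finset.univ.erase i).sum ⇑k := rfl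
  omega

lemma Nval_lower {k : Fin n →₀ ℕ} {S : Finset (Fin n)} {i : Fin n}
    (hi : i ∈ S) (hk : 1 ≤ k i) :
    Nval n (k - Finsupp.single i 1, S.erase i) = Nval n (k, S) := by
  have hc : S.card ≤ n := by simpa using Finset.card_le_univ S
  have hcpos : 1 ≤ S.card := Finset.card_pos.mpr ⟨i, hi⟩
  have hce : (S.erase i).card = S.card - 1 := Finset.card_erase_of_mem hi
  have hsum := sum_sub_single hk
  simp only [Nval, hce]
  omega

variable (R n) in
def Hmap : BVForms R n →ₗ[R] BVForms R n :=
  ofBasis R n fun b => ((Nval n b : R)⁻¹) • ∑ a ∈ b.2ᶜ,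
    insSign R n a b.2 • Finsupp.single (b.1 + Finsupp.single a 1, insert a b.2) (1 : R)

lemma DeltaBV_single (b : BVBasis n) (r : R) :
    DeltaBV R n (Finsupp.single b r) = r • ∑ i ∈ b.2,
      ((b.1 i : R) * insSign R n i b.2) •
        Finsupp.single (b.1 - Finsupp.single i 1, b.2.erase i) (1 : R) :=
  ofBasis_single _ b r

lemma Hmap_single (b : BVBasis n) (r : R) :
    Hmap R n (Finsupp.single b r) = r • (((Nval n b : R)⁻¹) • ∑ a ∈ b.2ᶜ,
      insSign R n a b.2 • Finsupp.single (b.1 + Finsupp.single a 1, insert a b.2) (1 : R)) :=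
  ofBasis_single _ b r

lemma count_identity (k : Fin n →₀ ℕ) (S : Finset (Fin n)) :
    (∑ a ∈ Sᶜ, ((k a : R) + 1)) + ∑ i ∈ S, (k i : R) = (Nval n (k, S) : R) := by
  have h1 : (∑ a ∈ Sᶜ, (k a + 1)) + ∑ i ∈ S, k i = Nval n (k, S) := by
    rw [Finset.sum_add_distrib, Finset.sum_const, smul_eq_mul, mul_one]
    have h2 : (∑ a ∈ Sᶜ, k a) + ∑ i ∈ S, k i = ∑ j, k j := by
      rw [add_comm, Finset.sum_add_sum_compl]
    have h3 : Sᶜ.card = n - S.card := by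
      rw [Finset.card_compl, Fintype.card_fin]
    simp only [Nval]
    omega
  calc (∑ a ∈ Sᶜ, ((k a : R) + 1)) + ∑ i ∈ S, (k i : R)
      = (((∑ a ∈ Sᶜ, (k a + 1)) + ∑ i ∈ S, k i : ℕ) : R) := by push_cast; ring
    _ = _ := by rw [h1]

lemma sq_shuffle {s x : R} (h : s * s = 1) : s * (x * s) = x := by
  rw [mul_comm x s, ← mul_assoc, h, one_mul]

lemma hT1 (k : Fin n →₀ ℕ) (S : Finset (Fin n)) :
    DeltaBV R n (Hmap R n (Finsupp.single (k, S) 1)) =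
      ((Nval n (k, S) : R)⁻¹) •
       ((∑ a ∈ Sᶜ, ((k a : R) + 1)) • Finsupp.single (k, S) (1:R)
        + ∑ a ∈ Sᶜ, ∑ i ∈ S,
            ((k i : R) * (insSign R n a S * insSign R n i (insert a S))) •
              Finsupp.single (k + Finsupp.single a 1 - Finsupp.single i 1,
                (insert a S).erase i) (1:R)) := by
  rw [Hmap_single, one_smul, map_smul, map_sum]
  congr 1
  have step : ∀ a ∈ Sᶜ,
      DeltaBV R n (insSign R n a S •
        Finsupp.single (k + Finsupp.single a 1, insert a S) (1:R)) =
      ((k a : R) + 1) • Finsupp.single (k, S) (1:R)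
        + ∑ i ∈ S, ((k i : R) * (insSign R n a S * insSign R n i (insert a S))) •
            Finsupp.single (k + Finsupp.single a 1 - Finsupp.single i 1,
              (insert a S).erase i) (1:R) := by
    intro a ha
    have ha' : a ∉ S := Finset.mem_compl.mp ha
    rw [map_smul, DeltaBV_single, one_smul, Finset.sum_insert ha', smul_add]
    congr 1
    · rw [smul_smul]
      have h1 : (k + Finsupp.single a 1 : Fin n →₀ ℕ) a = k a + 1 := by
        simp [Finsupp.add_apply]
      have h2 : (k + Finsupp.single a 1 - Finsupp.single a 1 : Fin n →₀ ℕ) = k :=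
        add_sub_cancel_fin k a
      rw [h1, h2, Finset.erase_insert ha', insSign_insert_self]
      push_cast
      rw [sq_shuffle (insSign_sq a S)]
    · rw [Finset.smul_sum]
      refine Finset.sum_congr rfl fun i hi => ?_
      have hia : i ≠ a := fun h => ha' (h ▸ hi)
      have h1 : (k + Finsupp.single a 1 : Fin n →₀ ℕ) i = k i := by
        simp [Finsupp.add_apply, Finsupp.single_apply, Ne.symm hia]
      rw [smul_smul, h1]
      ring_nf
  rw [Finset.sum_congr rfl step, Finset.sum_add_distrib, ← Finset.sum_smul]

lemma sq_shuffle' {s x : R} (h : s * s = 1) : x * (s * s) = x := by rw [h, mul_one]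

lemma hT2 (k : Fin n →₀ ℕ) (S : Finset (Fin n)) :
    Hmap R n (DeltaBV R n (Finsupp.single (k, S) 1)) =
      ((Nval n (k, S) : R)⁻¹) •
       ((∑ i ∈ S, (k i : R)) • Finsupp.single (k, S) (1:R)
        + ∑ a ∈ Sᶜ, ∑ i ∈ S,
            ((k i : R) * (insSign R n i S * insSign R n a (S.erase i))) •
              Finsupp.single (k + Finsupp.single a 1 - Finsupp.single i 1,
                (insert a S).erase i) (1:R)) := by
  rw [DeltaBV_single, one_smul, map_sum]
  have step : ∀ i ∈ S,
      Hmap R n (((k i : R) * insSign R n i S) •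
        Finsupp.single (k - Finsupp.single i 1, S.erase i) (1:R)) =
      ((Nval n (k, S) : R)⁻¹) •
        ((k i : R) • Finsupp.single (k, S) (1:R)
         + ∑ a ∈ Sᶜ, ((k i : R) * (insSign R n i S * insSign R n a (S.erase i))) •
            Finsupp.single (k + Finsupp.single a 1 - Finsupp.single i 1,
              (insert a S).erase i) (1:R)) := by
    intro i hi
    by_cases hk : k i = 0
    · rw [map_smul]
      simp only [hk, Nat.cast_zero, zero_mul, zero_smul, zero_add, smul_zero]
      rw [Finset.sum_eq_zero fun a _ => rfl, smul_zero]
    · have hk1 : 1 ≤ k i := Nat.one_le_iff_ne_zero.mpr hk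
      rw [map_smul, Hmap_single, one_smul, Nval_lower hi hk1]
      rw [Finset.compl_erase, Finset.sum_insert (by simp [hi] : i ∉ Sᶜ)]
      rw [sub_add_cancel_fin hk1, Finset.insert_erase hi, insSign_erase_self]
      rw [smul_comm]
      congr 1
      rw [smul_add]
      congr 1
      · rw [smul_smul, mul_assoc, sq_shuffle' (insSign_sq i S)]
      · rw [Finset.smul_sum]
        refine Finset.sum_congr rfl fun a ha => ?_
        have ha' : a ∉ S := Finset.mem_compl.mp ha
        have hia : a ≠ i := fun h => ha' (h ▸ hi)
        rw [add_sub_comm_fin hk1, ← Finset.erase_insert_of_ne hia]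
        rw [smul_smul]
        ring_nf
  rw [Finset.sum_congr rfl step, ← Finset.smul_sum, Finset.sum_add_distrib,
    ← Finset.sum_smul, Finset.sum_comm]

lemma homotopy_single (b : BVBasis n) :
    DeltaBV R n (Hmap R n (Finsupp.single b 1)) + Hmap R n (DeltaBV R n (Finsupp.single b 1))
      = Finsupp.single b 1 -
        (Finsupp.single b (1:R) ((0 : Fin n →₀ ℕ), (Finset.univ : Finset (Fin n)))) •
          topTheta R n := by
  obtain ⟨k, S⟩ := b
  rw [hT1, hT2, ← smul_add]
  have hC : (∑ a ∈ Sᶜ, ∑ i ∈ S,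
        ((k i : R) * (insSign R n a S * insSign R n i (insert a S))) •
          Finsupp.single (k + Finsupp.single a 1 - Finsupp.single i 1,
            (insert a S).erase i) (1:R))
      + (∑ a ∈ Sᶜ, ∑ i ∈ S,
        ((k i : R) * (insSign R n i S * insSign R n a (S.erase i))) •
          Finsupp.single (k + Finsupp.single a 1 - Finsupp.single i 1,
            (insert a S).erase i) (1:R)) = 0 := by
    rw [← Finset.sum_add_distrib]
    refine Finset.sum_eq_zero fun a ha => ?_
    rw [← Finset.sum_add_distrib]
    refine Finset.sum_eq_zero fun i hi => ?_
    rw [← add_smul, ← mul_add, insSign_cross S (Finset.mem_compl.mp ha) hi,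
      mul_zero, zero_smul]
  rw [add_add_add_comm, hC, add_zero, ← add_smul, count_identity]
  by_cases hb : (k, S) = ((0 : Fin n →₀ ℕ), (Finset.univ : Finset (Fin n)))
  · rw [hb]
    have hN : (Nval n ((0 : Fin n →₀ ℕ), (Finset.univ : Finset (Fin n))) : R) = 0 := by
      simp [Nval, Finset.card_univ]
    rw [hN, zero_smul, smul_zero, Finsupp.single_eq_same, one_smul, topTheta, sub_self]
  · have hN : Nval n (k, S) ≠ 0 := fun h => hb (Nval_eq_zero h)
    have hN' : (Nval n (k, S) : R) ≠ 0 := Nat.cast_ne_zero.mpr hN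
    rw [smul_smul, inv_mul_cancel₀ hN', one_smul, Finsupp.single_apply, if_neg hb,
      zero_smul, sub_zero]

lemma homotopy (v : BVForms R n) :
    DeltaBV R n (Hmap R n v) + Hmap R n (DeltaBV R n v)
      = v - (v ((0 : Fin n →₀ ℕ), Finset.univ)) • topTheta R n := by
  induction v using Finsupp.induction_linear with
  | zero => simp
  | add f g hf hg =>
    rw [map_add, map_add, map_add, map_add, Finsupp.add_apply, add_smul]
    calc DeltaBV R n (Hmap R n f) + DeltaBV R n (Hmap R n g)
          + (Hmap R n (DeltaBV R n f) + Hmap R n (DeltaBV R n g))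
        = (DeltaBV R n (Hmap R n f) + Hmap R n (DeltaBV R n f))
          + (DeltaBV R n (Hmap R n g) + Hmap R n (DeltaBV R n g)) := by abel
      _ = (f - f ((0 : Fin n →₀ ℕ), Finset.univ) • topTheta R n)
          + (g - g ((0 : Fin n →₀ ℕ), Finset.univ) • topTheta R n) := by rw [hf, hg]
      _ = _ := by abel
  | single b r =>
    have h1 : Finsupp.single b r = r • Finsupp.single b (1:R) := by
      rw [Finsupp.smul_single, smul_eq_mul, mul_one]
    rw [h1, map_smul, map_smul, map_smul, map_smul, ← smul_add, homotopy_single,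
      Finsupp.smul_apply, smul_sub, smul_smul, smul_eq_mul]

lemma eps_Delta (w : BVForms R n) :
    DeltaBV R n w ((0 : Fin n →₀ ℕ), Finset.univ) = 0 := by
  induction w using Finsupp.induction_linear with
  | zero => simp
  | add f g hf hg => rw [map_add, Finsupp.add_apply, hf, hg, add_zero]
  | single b r =>
    rw [DeltaBV_single, Finsupp.smul_apply, Finsupp.finset_sum_apply]
    rw [Finset.sum_eq_zero, smul_zero]
    intro i hi
    rw [Finsupp.smul_apply, Finsupp.single_apply, if_neg, smul_zero]
    intro h
    have h2 : b.2.erase i = Finset.univ := congrArg Prod.snd h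
    have h3 : (b.2.erase i).card < n :=
      lt_of_lt_of_le (Finset.card_erase_lt_of_mem hi)
        (by simpa using Finset.card_le_univ b.2)
    rw [h2] at h3
    simp [Finset.card_univ] at h3

lemma part1 (c : R) (w : BVForms R n) (h : c • topTheta R n = DeltaBV R n w) : c = 0 := by
  have h0 := congrArg (fun v : BVForms R n => v ((0 : Fin n →₀ ℕ), Finset.univ)) h
  simpa [topTheta, Finsupp.smul_apply, Finsupp.single_eq_same, eps_Delta] using h0


end Aux

/-- The cohomology of the BV Laplacian is one-dimensional, generated by `θ_1⋯θ_n`. -/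
theorem bv_cohomology :
    (∀ (c : R) (w : BVForms R n), c • topTheta R n = DeltaBV R n w → c = 0)
    ∧ (∀ v : BVForms R n, DeltaBV R n v = 0 →
        ∃! c : R, ∃ w : BVForms R n, v = c • topTheta R n + DeltaBV R n w) := by
  refine ⟨part1, fun v hv => ?_⟩
  have h := homotopy v
  rw [hv, map_zero, add_zero] at h
  refine ⟨v ((0 : Fin n →₀ ℕ), Finset.univ), ⟨Hmap R n v, by rw [h]; abel⟩, ?_⟩
  rintro c' ⟨w', hw'⟩
  have key : (c' - v ((0 : Fin n →₀ ℕ), Finset.univ)) • topTheta R n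
      = DeltaBV R n (Hmap R n v - w') := by
    rw [map_sub, h, sub_smul]
    have hd : DeltaBV R n w' = v - c' • topTheta R n := by rw [hw']; abel
    rw [hd]
    abel
  exact sub_eq_zero.mp (part1 _ _ key)

end
end
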